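/- (Miura transformation) Let Ω ⊆ ℂ × ℂ be open and let x : Ω → ℂ be holomorphic in both variables (z, t), satisfying ∂x/∂t = −( ∂³x/∂z³ − (3/2)·x²·(∂x/∂z) ) on Ω. Then the function u := (1/2)·(∂x/∂z) − (1/4)·x² satisfies the KdV equation ∂u/∂t = −∂³u/∂z³ − 6·u·(∂u/∂z) on Ω. -/

import Mathlib

open Complex

/-- Partial derivative in the first (space, `z`) variable of a function on `ℂ × ℂ`. -/
noncomputable def dz (f : ℂ × ℂ → ℂ) (p : ℂ × ℂ) : ℂ := fderiv ℂ f p (1, 0)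

/-- Partial derivative in the second (time, `t`) variable of a function on `ℂ × ℂ`. -/
noncomputable def dt (f : ℂ × ℂ → ℂ) (p : ℂ × ℂ) : ℂ := fderiv ℂ f p (0, 1)

section Helpers

variable {f g : ℂ × ℂ → ℂ} {p : ℂ × ℂ}

lemma dv_sub (hf : DifferentiableAt ℂ f p) (hg : DifferentiableAt ℂ g p) (v : ℂ × ℂ) :
    fderiv ℂ (fun q => f q - g q) p v = fderiv ℂ f p v - fderiv ℂ g p v := by
  rw [fderiv_fun_sub hf hg]; simp

lemma dv_add (hf : DifferentiableAt ℂ f p) (hg : DifferentiableAt ℂ g p) (v : ℂ × ℂ) :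
    fderiv ℂ (fun q => f q + g q) p v = fderiv ℂ f p v + fderiv ℂ g p v := by
  rw [fderiv_fun_add hf hg]; simp

lemma dv_neg (hf : DifferentiableAt ℂ f p) (v : ℂ × ℂ) :
    fderiv ℂ (fun q => -f q) p v = -fderiv ℂ f p v := by
  rw [fderiv_fun_neg]; simp

lemma dv_const_mul (hf : DifferentiableAt ℂ f p) (c : ℂ) (v : ℂ × ℂ) :
    fderiv ℂ (fun q => c * f q) p v = c * fderiv ℂ f p v := by
  rw [fderiv_const_mul hf]; simp

lemma dv_mul (hf : DifferentiableAt ℂ f p) (hg : DifferentiableAt ℂ g p) (v : ℂ × ℂ) :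
    fderiv ℂ (fun q => f q * g q) p v = fderiv ℂ f p v * g p + f p * fderiv ℂ g p v := by
  rw [fderiv_fun_mul hf hg]; simp; ring

lemma dv_sq (hf : DifferentiableAt ℂ f p) (v : ℂ × ℂ) :
    fderiv ℂ (fun q => f q ^ 2) p v = 2 * f p * fderiv ℂ f p v := by
  have h : (fun q => f q ^ 2) = fun q => f q * f q := by ext q; ring
  rw [h, dv_mul hf hf]; ring

lemma dv_comm (h : AnalyticAt ℂ f p) (v w : ℂ × ℂ) :
    fderiv ℂ (fun q => fderiv ℂ f q v) p w = fderiv ℂ (fun q => fderiv ℂ f q w) p v := by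
  have hd : DifferentiableAt ℂ (fderiv ℂ f) p := h.fderiv.differentiableAt
  rw [fderiv_clm_apply hd (differentiableAt_const v),
    fderiv_clm_apply hd (differentiableAt_const w)]
  simp only [fderiv_fun_const, ContinuousLinearMap.add_apply, ContinuousLinearMap.comp_apply,
    Pi.zero_apply, ContinuousLinearMap.zero_apply, map_zero, zero_add,
    ContinuousLinearMap.flip_apply]
  exact (h.contDiffAt.isSymmSndFDerivAt (n := 2) (by simp [minSmoothness_of_isRCLikeNormedField])).eq w v

lemma dz_sub (hf : DifferentiableAt ℂ f p) (hg : DifferentiableAt ℂ g p) :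
    dz (fun q => f q - g q) p = dz f p - dz g p := dv_sub hf hg _

lemma dz_add (hf : DifferentiableAt ℂ f p) (hg : DifferentiableAt ℂ g p) :
    dz (fun q => f q + g q) p = dz f p + dz g p := dv_add hf hg _

lemma dz_neg (hf : DifferentiableAt ℂ f p) :
    dz (fun q => -f q) p = -dz f p := dv_neg hf _

lemma dz_const_mul (hf : DifferentiableAt ℂ f p) (c : ℂ) :
    dz (fun q => c * f q) p = c * dz f p := dv_const_mul hf c _

lemma dz_mul (hf : DifferentiableAt ℂ f p) (hg : DifferentiableAt ℂ g p) :
    dz (fun q => f q * g q) p = dz f p * g p + f p * dz g p := dv_mul hf hg _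

lemma dz_sq (hf : DifferentiableAt ℂ f p) :
    dz (fun q => f q ^ 2) p = 2 * f p * dz f p := dv_sq hf _

lemma dt_sub (hf : DifferentiableAt ℂ f p) (hg : DifferentiableAt ℂ g p) :
    dt (fun q => f q - g q) p = dt f p - dt g p := dv_sub hf hg _

lemma dt_const_mul (hf : DifferentiableAt ℂ f p) (c : ℂ) :
    dt (fun q => c * f q) p = c * dt f p := dv_const_mul hf c _

lemma dt_sq (hf : DifferentiableAt ℂ f p) :
    dt (fun q => f q ^ 2) p = 2 * f p * dt f p := dv_sq hf _

lemma dt_dz_comm (h : AnalyticAt ℂ f p) : dt (dz f) p = dz (dt f) p :=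
  dv_comm h _ _

lemma dz_analytic {Ω : Set (ℂ × ℂ)} (hf : AnalyticOnNhd ℂ f Ω) :
    AnalyticOnNhd ℂ (dz f) Ω := fun q hq =>
  ((ContinuousLinearMap.apply ℂ ℂ ((1 : ℂ), (0 : ℂ))).analyticAt _).comp (hf.fderiv q hq)

lemma dz_congr' {Ω : Set (ℂ × ℂ)} (hΩ : IsOpen Ω) (hp : p ∈ Ω) (h : ∀ q ∈ Ω, f q = g q) :
    dz f p = dz g p := by
  unfold dz
  rw [Filter.EventuallyEq.fderiv_eq (Filter.eventually_of_mem (hΩ.mem_nhds hp) h)]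

end Helpers

/-- Miura transformation: if a holomorphic `x(z,t)` satisfies the mKdV-type equation
`∂x/∂t = −(x''' − (3/2) x² x')`, then `u = (1/2) x' − (1/4) x²` satisfies the KdV
equation `∂u/∂t = −u''' − 6 u u'`. -/
theorem miura_transformation_mkdv_to_kdv
    (Ω : Set (ℂ × ℂ)) (hΩ : IsOpen Ω) (x : ℂ × ℂ → ℂ)
    (hx : AnalyticOnNhd ℂ x Ω)
    (hev : ∀ p ∈ Ω,
      dt x p = -(dz (dz (dz x)) p - (3 / 2) * (x p) ^ 2 * dz x p)) :
    ∀ p ∈ Ω,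
      dt (fun q => (1 / 2) * dz x q - (1 / 4) * (x q) ^ 2) p
        = -(dz (dz (dz (fun q => (1 / 2) * dz x q - (1 / 4) * (x q) ^ 2))) p)
          - 6 * ((1 / 2) * dz x p - (1 / 4) * (x p) ^ 2)
            * dz (fun q => (1 / 2) * dz x q - (1 / 4) * (x q) ^ 2) p := by
  intro p hp
  have hx1 : AnalyticOnNhd ℂ (dz x) Ω := dz_analytic hx
  have hx2 : AnalyticOnNhd ℂ (dz (dz x)) Ω := dz_analytic hx1
  have hx3 : AnalyticOnNhd ℂ (dz (dz (dz x))) Ω := dz_analytic hx2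
  -- differentiability shorthands
  have d0 : ∀ q ∈ Ω, DifferentiableAt ℂ x q := fun q hq => (hx q hq).differentiableAt
  have d1 : ∀ q ∈ Ω, DifferentiableAt ℂ (dz x) q := fun q hq => (hx1 q hq).differentiableAt
  have d2 : ∀ q ∈ Ω, DifferentiableAt ℂ (dz (dz x)) q := fun q hq => (hx2 q hq).differentiableAt
  have d3 : ∀ q ∈ Ω, DifferentiableAt ℂ (dz (dz (dz x))) q :=
    fun q hq => (hx3 q hq).differentiableAt
  -- first z-derivative of u
  have hU1 : ∀ q ∈ Ω, dz (fun r => (1 / 2) * dz x r - (1 / 4) * (x r) ^ 2) q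
      = (1 / 2) * dz (dz x) q - (1 / 4) * (2 * x q * dz x q) := by
    intro q hq
    rw [dz_sub ((d1 q hq).const_mul _) (((d0 q hq).fun_pow 2).const_mul _),
      dz_const_mul (d1 q hq), dz_const_mul ((d0 q hq).fun_pow 2), dz_sq (d0 q hq)]
  -- second z-derivative of u
  have hU2 : ∀ q ∈ Ω, dz (dz (fun r => (1 / 2) * dz x r - (1 / 4) * (x r) ^ 2)) q
      = (1 / 2) * dz (dz (dz x)) q
        - (1 / 4) * ((2 * dz x q) * dz x q + (2 * x q) * dz (dz x) q) := by
    intro q hq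
    rw [dz_congr' hΩ hq hU1,
      dz_sub ((d2 q hq).const_mul _) ((((d0 q hq).const_mul 2).fun_mul (d1 q hq)).const_mul _),
      dz_const_mul (d2 q hq),
      dz_const_mul (((d0 q hq).const_mul 2).fun_mul (d1 q hq)),
      dz_mul ((d0 q hq).const_mul 2) (d1 q hq),
      dz_const_mul (d0 q hq)]
  -- third z-derivative of u
  have hU3 : dz (dz (dz (fun r => (1 / 2) * dz x r - (1 / 4) * (x r) ^ 2))) p
      = (1 / 2) * dz (dz (dz (dz x))) p
        - (1 / 4) * (((2 * dz (dz x) p) * dz x p + (2 * dz x p) * dz (dz x) p)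
          + ((2 * dz x p) * dz (dz x) p + (2 * x p) * dz (dz (dz x)) p)) := by
    rw [dz_congr' hΩ hp hU2,
      dz_sub ((d3 p hp).const_mul _)
        ((((d1 p hp).const_mul 2).fun_mul (d1 p hp)).fun_add
          (((d0 p hp).const_mul 2).fun_mul (d2 p hp)) |>.const_mul _),
      dz_const_mul (d3 p hp),
      dz_const_mul ((((d1 p hp).const_mul 2).fun_mul (d1 p hp)).fun_add
        (((d0 p hp).const_mul 2).fun_mul (d2 p hp))),
      show dz (fun q => (2 * dz x q) * dz x q + (2 * x q) * dz (dz x) q) p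
          = ((2 * dz (dz x) p) * dz x p + (2 * dz x p) * dz (dz x) p)
            + ((2 * dz x p) * dz (dz x) p + (2 * x p) * dz (dz (dz x)) p) from ?_]
    rw [dz_add (((d1 p hp).const_mul 2).fun_mul (d1 p hp)) (((d0 p hp).const_mul 2).fun_mul (d2 p hp)),
      dz_mul ((d1 p hp).const_mul 2) (d1 p hp),
      dz_mul ((d0 p hp).const_mul 2) (d2 p hp),
      dz_const_mul (d1 p hp), dz_const_mul (d0 p hp)]
  -- time derivative of u
  have hT : dt (fun r => (1 / 2) * dz x r - (1 / 4) * (x r) ^ 2) p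
      = (1 / 2) * dt (dz x) p - (1 / 4) * (2 * x p * dt x p) := by
    rw [dt_sub ((d1 p hp).const_mul _) (((d0 p hp).fun_pow 2).const_mul _),
      dt_const_mul (d1 p hp), dt_const_mul ((d0 p hp).fun_pow 2), dt_sq (d0 p hp)]
  -- commute and use the evolution equation
  have hC : dt (dz x) p
      = dz (fun q => -(dz (dz (dz x)) q - (3 / 2) * (x q) ^ 2 * dz x q)) p := by
    rw [dt_dz_comm (hx p hp)]
    exact dz_congr' hΩ hp hev
  -- expand the z-derivative of the mKdV right-hand side
  have hE : dz (fun q => -(dz (dz (dz x)) q - (3 / 2) * (x q) ^ 2 * dz x q)) p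
      = -(dz (dz (dz (dz x))) p
          - (((3 / 2) * (2 * x p * dz x p)) * dz x p
            + ((3 / 2) * (x p) ^ 2) * dz (dz x) p)) := by
    have hmul : DifferentiableAt ℂ (fun q => (3 / 2 : ℂ) * (x q) ^ 2 * dz x q) p :=
      (((d0 p hp).fun_pow 2).const_mul _).fun_mul (d1 p hp)
    rw [dz_neg ((d3 p hp).fun_sub hmul), dz_sub (d3 p hp) hmul,
      dz_mul (((d0 p hp).fun_pow 2).const_mul _) (d1 p hp),
      dz_const_mul ((d0 p hp).fun_pow 2), dz_sq (d0 p hp)]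
  have hevp := hev p hp
  rw [hT, hC, hE, hU3, hU1 p hp, hevp]
  ring
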